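/- With the transformation coefficients S as defined, for any weak stability function τ : C → T and any κ : {1,…,n} → C (n ≥ 1), one has S({1,…,n},≤,κ,τ,τ) = 1 if n = 1 and S({1,…,n},≤,κ,τ,τ) = 0 if n > 1. -/

import Mathlib

open scoped Classical
open Finset Function

/-- A weak stability function on `C ⊆ A` with values in a total order:
whenever `α, γ ∈ C` (so that `β = α + γ`), either `τ α ≤ τ β ≤ τ γ` or
`τ α ≥ τ β ≥ τ γ`. -/
def WeakStability {A T : Type*} [AddCommGroup A] [LinearOrder T] (C : Set A) (τ : A → T) : Prop :=
  ∀ α γ : A, α ∈ C → γ ∈ C →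
    (τ α ≤ τ (α + γ) ∧ τ (α + γ) ≤ τ γ) ∨ (τ γ ≤ τ (α + γ) ∧ τ (α + γ) ≤ τ α)

/-- Sum `κ 0 + ⋯ + κ i`. -/
def lowSum {A : Type*} [AddCommGroup A] (κ : ℕ → A) (i : ℕ) : A :=
  ∑ j ∈ Finset.range (i + 1), κ j

/-- Sum `κ (i+1) + ⋯ + κ (n-1)`. -/
def highSum {A : Type*} [AddCommGroup A] (κ : ℕ → A) (i n : ℕ) : A :=
  ∑ j ∈ Finset.Ico (i + 1) n, κ j

/-- Condition (a) at position `i` in the definition of the coefficient `S`. -/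
def SCondA {A T T' : Type*} [AddCommGroup A] [LinearOrder T] [LinearOrder T']
    (τ : A → T) (τ' : A → T') (n : ℕ) (κ : ℕ → A) (i : ℕ) : Prop :=
  τ (κ i) ≤ τ (κ (i + 1)) ∧ τ' (highSum κ i n) < τ' (lowSum κ i)

/-- Condition (b) at position `i` in the definition of the coefficient `S`. -/
def SCondB {A T T' : Type*} [AddCommGroup A] [LinearOrder T] [LinearOrder T']
    (τ : A → T) (τ' : A → T') (n : ℕ) (κ : ℕ → A) (i : ℕ) : Prop :=
  τ (κ (i + 1)) < τ (κ i) ∧ τ' (lowSum κ i) ≤ τ' (highSum κ i n)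

/-- The transformation coefficient `S({1,…,n},≤,κ,τ,τ')` for the sequence
`κ 0, …, κ (n-1)` (indexed from `0`). -/
noncomputable def Scoeff {A T T' : Type*} [AddCommGroup A] [LinearOrder T] [LinearOrder T']
    (τ : A → T) (τ' : A → T') (n : ℕ) (κ : ℕ → A) : ℤ :=
  if ∀ i ∈ Finset.range (n - 1), SCondA τ τ' n κ i ∨ SCondB τ τ' n κ i then
    (-1) ^ ((Finset.range (n - 1)).filter (SCondA τ τ' n κ)).card
  else 0

/-- The sequence `κ 0, …, κ (n-1)` is `τ`-reversing. -/
def Reversing {A T : Type*} [AddCommGroup A] [LinearOrder T] (τ : A → T) (n : ℕ) (κ : ℕ → A) :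
    Prop :=
  ∀ i, i + 1 < n → τ (κ (i + 1)) < τ (κ i)

/-- The sequence `κ 0, …, κ (n-1)` is `τ`-semistable. -/
def Semistable {A T : Type*} [AddCommGroup A] [LinearOrder T] (τ : A → T) (n : ℕ) (κ : ℕ → A) :
    Prop :=
  ∀ i, i + 1 < n → τ (lowSum κ i) ≤ τ (highSum κ i n)

/-- Extend a `Fin n`-indexed sequence to `ℕ` by zero. -/
def toSeq {A : Type*} [AddCommGroup A] {n : ℕ} (κ : Fin n → A) : ℕ → A :=
  fun j => if h : j < n then κ ⟨j, h⟩ else 0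

/-- The subsequence of `κ` on a subset `s ⊆ Fin n`, enumerated in increasing order. -/
noncomputable def fiberSeq {A : Type*} [AddCommGroup A] {n : ℕ} (κ : Fin n → A)
    (s : Finset (Fin n)) : ℕ → A :=
  fun j => if h : j < s.card then κ (s.orderIsoOfFin rfl ⟨j, h⟩).1 else 0

/-- The transformation coefficient `U({1,…,n},≤,κ,τ,τ')`. -/
noncomputable def Ucoeff {A T T' : Type*} [AddCommGroup A] [LinearOrder T] [LinearOrder T']
    (τ : A → T) (τ' : A → T') (n : ℕ) (κ : ℕ → A) : ℚ :=
  ∑ l ∈ Finset.Icc 1 n, ∑ m ∈ Finset.Icc l n,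
    ∑ p ∈ Finset.univ.filter
        (fun p : (Fin n → Fin m) × (Fin m → Fin l) =>
          Surjective p.1 ∧ Monotone p.1 ∧ Surjective p.2 ∧ Monotone p.2),
      (if (∀ i : Fin n, τ (κ i.1) =
              τ (∑ j ∈ Finset.univ.filter (fun j : Fin n => p.1 j = p.1 i), κ j.1)) ∧
          (∀ a : Fin l,
              τ' (∑ j ∈ Finset.univ.filter (fun j : Fin n => p.2 (p.1 j) = a), κ j.1) =
              τ' (∑ j ∈ Finset.range n, κ j)) then
        (∏ a : Fin l,
          ((Scoeff τ τ' (Finset.univ.filter (fun b : Fin m => p.2 b = a)).card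
            (fiberSeq
              (fun b : Fin m => ∑ j ∈ Finset.univ.filter (fun j : Fin n => p.1 j = b), κ j.1)
              (Finset.univ.filter (fun b : Fin m => p.2 b = a)))) : ℚ))
        * ((-1 : ℚ) ^ (l - 1) / (l : ℚ))
        * ∏ b : Fin m,
            ((1 : ℚ) / (Nat.factorial (Finset.univ.filter (fun j : Fin n => p.1 j = b)).card : ℚ))
      else 0)


section MyAuxSection

variable {A T : Type*} [AddCommGroup A] [LinearOrder T]

private lemma myIcoMem (C : Set A) (hC : ∀ a b : A, a ∈ C → b ∈ C → a + b ∈ C)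
    {n : ℕ} {κ : ℕ → A} (hκ : ∀ i, i < n → κ i ∈ C) :
    ∀ t s, s < t → t ≤ n → (∑ j ∈ Finset.Ico s t, κ j) ∈ C := by
  intro t
  induction t with
  | zero => intro s hs ht; omega
  | succ t ih =>
    intro s hs ht
    rcases Nat.lt_or_ge s t with h | h
    · rw [Finset.sum_Ico_succ_top (by omega)]
      exact hC _ _ (ih s h (by omega)) (hκ t (by omega))
    · have hst : s = t := by omega
      subst hst
      have hIco : Finset.Ico s (s+1) = {s} := by
        ext x; simp [Finset.mem_Ico, Nat.lt_succ_iff]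
      rw [hIco, Finset.sum_singleton]
      exact hκ s (by omega)

private lemma myKey (C : Set A) (hC : ∀ a b : A, a ∈ C → b ∈ C → a + b ∈ C)
    (τ : A → T) (hτ : WeakStability C τ) (n : ℕ) (hn : 2 ≤ n)
    (κ : ℕ → A) (hκ : ∀ i, i < n → κ i ∈ C)
    (H : ∀ i ∈ Finset.range (n-1), SCondA τ τ n κ i ∨ SCondB τ τ n κ i) : False := by
  have hlowmem : ∀ i, i < n → lowSum κ i ∈ C := by
    intro i hi
    rw [lowSum, Finset.range_eq_Ico]
    exact myIcoMem C hC hκ (i+1) 0 (by omega) (by omega)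
  have hhighmem : ∀ i, i + 1 < n → highSum κ i n ∈ C := by
    intro i hi
    exact myIcoMem C hC hκ n (i+1) (by omega) le_rfl
  have hsplit : ∀ i, i + 1 < n →
      lowSum κ i + highSum κ i n = ∑ j ∈ Finset.range n, κ j := by
    intro i hi
    rw [lowSum, highSum, Finset.range_eq_Ico]
    rw [Finset.range_eq_Ico]
    exact Finset.sum_Ico_consecutive κ (m := 0) (n := i+1) (k := n) (by omega) (by omega)
  have hlowsucc : ∀ i : ℕ, lowSum κ (i+1) = lowSum κ i + κ (i+1) := by
    intro i; rw [lowSum, lowSum, Finset.sum_range_succ]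
  have hhighsucc : ∀ i, i + 2 < n → highSum κ i n = κ (i+1) + highSum κ (i+1) n := by
    intro i hi
    rw [highSum, highSum, Finset.sum_eq_sum_Ico_succ_bot (by omega)]
  have hhighlast : highSum κ (n-2) n = κ (n-1) := by
    rw [highSum]
    have h1 : n - 2 + 1 = n - 1 := by omega
    have h2 : Finset.Ico (n-1) n = {n-1} := by
      ext x; simp [Finset.mem_Ico]; omega
    rw [h1, h2, Finset.sum_singleton]
  have SW3 : ∀ i, i + 1 < n →
      (τ (lowSum κ i) ≤ τ (∑ j ∈ Finset.range n, κ j) ∧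
        τ (∑ j ∈ Finset.range n, κ j) ≤ τ (highSum κ i n)) ∨
      (τ (highSum κ i n) ≤ τ (∑ j ∈ Finset.range n, κ j) ∧
        τ (∑ j ∈ Finset.range n, κ j) ≤ τ (lowSum κ i)) := by
    intro i hi
    have := hτ (lowSum κ i) (highSum κ i n) (hlowmem i (by omega)) (hhighmem i hi)
    rwa [hsplit i hi] at this
  have SW1 : ∀ i, i + 2 ≤ n →
      (τ (lowSum κ i) ≤ τ (lowSum κ (i+1)) ∧ τ (lowSum κ (i+1)) ≤ τ (κ (i+1))) ∨
      (τ (κ (i+1)) ≤ τ (lowSum κ (i+1)) ∧ τ (lowSum κ (i+1)) ≤ τ (lowSum κ i)) := by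
    intro i hi
    have := hτ (lowSum κ i) (κ (i+1)) (hlowmem i (by omega)) (hκ (i+1) (by omega))
    rwa [← hlowsucc i] at this
  have SW2 : ∀ i, i + 2 < n →
      (τ (κ (i+1)) ≤ τ (highSum κ i n) ∧ τ (highSum κ i n) ≤ τ (highSum κ (i+1) n)) ∨
      (τ (highSum κ (i+1) n) ≤ τ (highSum κ i n) ∧ τ (highSum κ i n) ≤ τ (κ (i+1))) := by
    intro i hi
    have := hτ (κ (i+1)) (highSum κ (i+1) n) (hκ (i+1) (by omega)) (hhighmem (i+1) (by omega))
    rwa [← hhighsucc i hi] at this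
  by_cases hall : ∀ i, i + 1 < n → SCondA τ τ n κ i
  · -- pure (a)-chain: τ∘κ increasing, τ(lowSum i) ≤ τ(κ i)
    have mono : ∀ i, i + 1 < n → τ (lowSum κ i) ≤ τ (κ i) := by
      intro i
      induction i with
      | zero => intro _; simp [lowSum]
      | succ k ih =>
        intro hk
        have hA : SCondA τ τ n κ k := hall k (by omega)
        rcases SW1 k (by omega) with ⟨_, h2⟩ | ⟨_, h2⟩
        · exact h2
        · exact h2.trans ((ih (by omega)).trans hA.1)
    have hA : SCondA τ τ n κ (n-2) := hall (n-2) (by omega)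
    obtain ⟨hA1, hA2⟩ := hA
    rw [show n - 2 + 1 = n - 1 from by omega] at hA1
    rw [hhighlast] at hA2
    have := (hA2.trans_le (mono (n-2) (by omega))).trans_le hA1
    exact lt_irrefl _ this
  · push_neg at hall
    obtain ⟨i₁, hi₁n, hi₁A⟩ := hall
    have hP : ∃ i, i + 1 < n ∧ SCondB τ τ n κ i :=
      ⟨i₁, hi₁n, (H i₁ (by simp [Finset.mem_range]; omega)).resolve_left hi₁A⟩
    classical
    set i₀ := Nat.find hP with hi₀def
    obtain ⟨hi₀n, hB⟩ := Nat.find_spec hP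
    have hmin : ∀ j, j < i₀ → SCondA τ τ n κ j := by
      intro j hj
      have hnB := Nat.find_min hP hj
      have hjn : j + 1 < n := by omega
      rcases H j (by simp [Finset.mem_range]; omega) with hA | hB'
      · exact hA
      · exact absurd ⟨hjn, hB'⟩ hnB
    obtain ⟨hb1, hb2⟩ := hB
    -- base facts at i₀
    have hmc : τ (lowSum κ i₀) ≤ τ (∑ j ∈ Finset.range n, κ j) ∧
        τ (∑ j ∈ Finset.range n, κ j) ≤ τ (highSum κ i₀ n) := by
      rcases SW3 i₀ hi₀n with h | h
      · exact h
      · exact ⟨hb2.trans h.1, h.2.trans hb2⟩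
    have hκc : τ (κ i₀) ≤ τ (∑ j ∈ Finset.range n, κ j) := by
      rcases i₀ with _ | j
      · have : lowSum κ 0 = κ 0 := by simp [lowSum]
        rw [← this]; exact hmc.1
      · by_contra hcon
        push_neg at hcon
        have hAj : SCondA τ τ n κ j := hmin j (by omega)
        have hj : τ (highSum κ j n) ≤ τ (∑ j ∈ Finset.range n, κ j) ∧
            τ (∑ j ∈ Finset.range n, κ j) ≤ τ (lowSum κ j) := by
          rcases SW3 j (by omega) with h | h
          · exact absurd ((hAj.2.trans_le h.1).trans_le h.2) (lt_irrefl _)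
          · exact h
        rcases SW2 j (by omega) with ⟨h1, h2⟩ | ⟨h1, h2⟩
        · exact absurd (hcon.trans_le (h1.trans hj.1)) (lt_irrefl _)
        · have e1 : τ (highSum κ j n) = τ (∑ j ∈ Finset.range n, κ j) :=
            le_antisymm hj.1 (hmc.2.trans h1)
          have hcm : τ (∑ j ∈ Finset.range n, κ j) < τ (lowSum κ j) := e1 ▸ hAj.2
          rcases SW1 j (by omega) with ⟨h1', _⟩ | ⟨h1', _⟩
          · exact absurd ((hcm.trans_le h1').trans_le hmc.1) (lt_irrefl _)
          · exact absurd ((hcon.trans_le h1').trans_le hmc.1) (lt_irrefl _)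
    -- the (b)-chain
    have chain : ∀ k, i₀ + k + 1 < n →
        τ (lowSum κ (i₀+k)) ≤ τ (∑ j ∈ Finset.range n, κ j) ∧
        τ (∑ j ∈ Finset.range n, κ j) ≤ τ (highSum κ (i₀+k) n) ∧
        τ (κ (i₀+k+1)) < τ (∑ j ∈ Finset.range n, κ j) := by
      intro k
      induction k with
      | zero =>
        intro _
        exact ⟨hmc.1, hmc.2, hb1.trans_le hκc⟩
      | succ k ih =>
        intro hk
        obtain ⟨ih1, ih2, ih3⟩ := ih (by omega)
        have hch : τ (∑ j ∈ Finset.range n, κ j) ≤ τ (highSum κ (i₀+k+1) n) := by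
          rcases SW2 (i₀+k) (by omega) with ⟨h1, h2⟩ | ⟨h1, h2⟩
          · exact ih2.trans h2
          · exact absurd ((ih2.trans h2).trans_lt ih3) (lt_irrefl _)
        have hml : τ (lowSum κ (i₀+k+1)) ≤ τ (∑ j ∈ Finset.range n, κ j) := by
          rcases SW1 (i₀+k) (by omega) with ⟨_, h2⟩ | ⟨_, h2⟩
          · exact h2.trans ih3.le
          · exact h2.trans ih1
        have hBc : SCondB τ τ n κ (i₀+k+1) := by
          rcases H (i₀+k+1) (by simp [Finset.mem_range]; omega) with hA | hB'
          · exact absurd ((hA.2.trans_le hml).trans_le hch) (lt_irrefl _)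
          · exact hB'
        have h3 : τ (κ (i₀+k+1+1)) < τ (∑ j ∈ Finset.range n, κ j) := hBc.1.trans ih3
        exact ⟨by show τ (lowSum κ (i₀+k+1)) ≤ _; exact hml,
               by show _ ≤ τ (highSum κ (i₀+k+1) n); exact hch,
               by show τ (κ (i₀+k+1+1)) < _; exact h3⟩
    obtain ⟨_, h2, h3⟩ := chain (n - 2 - i₀) (by omega)
    have e : i₀ + (n - 2 - i₀) = n - 2 := by omega
    rw [e] at h2 h3
    rw [show n - 2 + 1 = n - 1 from by omega] at h3
    rw [hhighlast] at h2
    exact lt_irrefl _ (h3.trans_le h2)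

end MyAuxSection

theorem stmt1 {A T : Type*} [AddCommGroup A] [LinearOrder T]
    (C : Set A) (hC : ∀ a b : A, a ∈ C → b ∈ C → a + b ∈ C) (h0 : (0 : A) ∉ C)
    (τ : A → T) (hτ : WeakStability C τ)
    (n : ℕ) (hn : 1 ≤ n) (κ : ℕ → A) (hκ : ∀ i, i < n → κ i ∈ C) :
    Scoeff τ τ n κ = if n = 1 then 1 else 0 := by
  rcases eq_or_lt_of_le hn with h1 | h2
  · rw [← h1]
    simp [Scoeff]
  · rw [if_neg (by omega), Scoeff, if_neg]
    intro H
    exact myKey C hC τ hτ n h2 κ hκ H
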